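/- Let θ ∈ ℝ be such that cos θ ≠ 0, sin θ ≠ 0 and tan θ is irrational. Then the set {(a'(t), b'(t), c'(t)) : t ≥ 0} is dense in the cube [0,1]³ ⊂ ℝ³ (and likewise the set obtained for t ≤ 0 is dense in [0,1]³). -/

import Mathlib

open Real Set

/-- Coordinate `a'` of the projected geodesic-line on the Heisenberg nil-manifold. -/
noncomputable def aLine (θ t : ℝ) : ℝ := Int.fract (t * Real.cos θ)

/-- Coordinate `b'` of the projected geodesic-line on the Heisenberg nil-manifold. -/
noncomputable def bLine (θ t : ℝ) : ℝ := Int.fract (t * Real.sin θ)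

/-- Coordinate `c'` of the projected geodesic-line on the Heisenberg nil-manifold. -/
noncomputable def cLine (θ t : ℝ) : ℝ :=
  Int.fract (t ^ 2 / 2 * Real.sin θ * Real.cos θ - (⌊t * Real.cos θ⌋ : ℝ) * (t * Real.sin θ))

namespace HeisDense

lemma fract_def (x : ℝ) : Int.fract x = x - (⌊x⌋ : ℝ) := rfl

/-- `x` is within `ε` of some integer. -/
def close (ε x : ℝ) : Prop := ∃ j : ℤ, |x - (j : ℝ)| < ε

lemma close_mono {ε ε' x : ℝ} (h : ε ≤ ε') (hc : close ε x) : close ε' x := by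
  obtain ⟨j, hj⟩ := hc; exact ⟨j, lt_of_lt_of_le hj h⟩

lemma close_add {ε₁ ε₂ x y : ℝ} (hx : close ε₁ x) (hy : close ε₂ y) :
    close (ε₁ + ε₂) (x + y) := by
  obtain ⟨j, hj⟩ := hx; obtain ⟨k, hk⟩ := hy
  refine ⟨j + k, ?_⟩
  have : x + y - ((j + k : ℤ) : ℝ) = (x - j) + (y - k) := by push_cast; ring
  rw [this]
  exact lt_of_le_of_lt (abs_add_le _ _) (add_lt_add hj hk)

lemma close_neg {ε x : ℝ} (hx : close ε x) : close ε (-x) := by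
  obtain ⟨j, hj⟩ := hx
  refine ⟨-j, ?_⟩
  have : -x - ((-j : ℤ) : ℝ) = -(x - j) := by push_cast; ring
  rw [this, abs_neg]; exact hj

lemma close_of_sub_int {ε x : ℝ} (j : ℤ) (hx : close ε x) : close ε (x - j) := by
  obtain ⟨k, hk⟩ := hx
  refine ⟨k - j, ?_⟩
  have : x - j - ((k - j : ℤ) : ℝ) = x - k := by push_cast; ring
  rw [this]; exact hk

lemma close_natmul {ε x : ℝ} {n : ℕ} (hn : 1 ≤ n) (hx : close ε x) :
    close ((n : ℝ) * ε) ((n : ℝ) * x) := by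
  obtain ⟨j, hj⟩ := hx
  refine ⟨n * j, ?_⟩
  have h : (n : ℝ) * x - ((n * j : ℤ) : ℝ) = (n : ℝ) * (x - j) := by push_cast; ring
  rw [h, abs_mul, abs_of_nonneg (by positivity : (0:ℝ) ≤ (n:ℝ))]
  exact (mul_lt_mul_iff_right₀ (by exact_mod_cast hn : (0:ℝ) < (n:ℝ))).2 hj

lemma close_sub_close {ε₁ ε₂ x y : ℝ} (hx : close ε₁ x) (hy : close ε₂ y) :
    close (ε₁ + ε₂) (x - y) := by
  have := close_add hx (close_neg hy); simpa [sub_eq_add_neg] using this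

/-- stepping lemma: multiples of a positive step pass within a step of any nonneg target -/
lemma hit {η c : ℝ} (hη : 0 < η) (hc : 0 ≤ c) : ∃ k : ℕ, c - η < (k : ℝ) * η ∧ (k : ℝ) * η ≤ c := by
  have hq0 : (0:ℤ) ≤ ⌊c / η⌋ := Int.floor_nonneg.2 (by positivity)
  have hcast : ((⌊c / η⌋.toNat : ℕ) : ℝ) = ((⌊c / η⌋ : ℤ) : ℝ) := by
    exact_mod_cast Int.toNat_of_nonneg hq0
  refine ⟨⌊c / η⌋.toNat, ?_, ?_⟩
  · rw [hcast]
    have h2 : c / η < (⌊c / η⌋ : ℝ) + 1 := Int.lt_floor_add_one (c / η)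
    have := (div_lt_iff₀ hη).1 h2
    linarith
  · rw [hcast]
    have h1 : (⌊c / η⌋ : ℝ) ≤ c / η := Int.floor_le (c / η)
    have := (le_div_iff₀ hη).1 h1
    linarith

/-- Dirichlet + irrationality: arbitrarily good nonzero approximations -/
lemma dirichlet {ξ : ℝ} (hξ : Irrational ξ) {δ : ℝ} (hδ : 0 < δ) :
    ∃ (p : ℕ) (P : ℤ), 1 ≤ p ∧ 0 < |(p : ℝ) * ξ - P| ∧ |(p : ℝ) * ξ - P| < δ := by
  obtain ⟨n, hn⟩ := exists_nat_gt (1 / δ)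
  have hn0 : 0 < n := by
    by_contra h
    push_neg at h
    interval_cases n
    · simp at hn; linarith [one_div_pos.2 hδ]
  obtain ⟨j, k, hk0, hkn, h⟩ := Real.exists_int_int_abs_mul_sub_le ξ hn0
  refine ⟨k.toNat, j, ?_, ?_, ?_⟩
  · omega
  · rw [abs_pos]
    intro hz
    have : (k : ℝ) * ξ = j := by
      have hk : ((k.toNat : ℕ) : ℝ) = (k : ℝ) := by exact_mod_cast Int.toNat_of_nonneg hk0.le
      rw [hk] at hz; linarith [sub_eq_zero.1 hz]
    have : ξ = (j : ℝ) / (k : ℝ) := by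
      field_simp at this ⊢
      · linarith [this]
    rw [this] at hξ
    have : ((j / k : ℚ) : ℝ) = (j : ℝ) / (k : ℝ) := by push_cast; ring
    exact (this ▸ hξ) ⟨j / k, rfl⟩
  · have hk : ((k.toNat : ℕ) : ℝ) = (k : ℝ) := by exact_mod_cast Int.toNat_of_nonneg hk0.le
    rw [hk]
    refine lt_of_le_of_lt h ?_
    rw [div_lt_iff₀ (by positivity)]
    rw [div_lt_iff₀ hδ] at hn
    nlinarith

lemma approx_step_pos {η ε : ℝ} (hη : 0 < η) (hηε : η < ε) (Z : ℝ) (B : ℕ) :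
    ∃ k : ℕ, B ≤ k ∧ ∃ i : ℤ, |(k : ℝ) * η - i - Z| < ε := by
  set T : ℤ := ⌈(B : ℝ) * η + η⌉ + 1 with hT
  have hTge : (B : ℝ) * η + η + 1 ≤ (T : ℝ) := by
    rw [hT]; push_cast
    linarith [Int.le_ceil ((B : ℝ) * η + η)]
  have hc0 : 0 ≤ (Z - ⌊Z⌋) + (T : ℝ) := by
    have h1 : 0 ≤ Z - ⌊Z⌋ := by linarith [Int.floor_le Z]
    have h2 : (0 : ℝ) ≤ (B : ℝ) * η + η := by positivity
    linarith
  obtain ⟨k, hk1, hk2⟩ := hit hη hc0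
  refine ⟨k, ?_, T - ⌊Z⌋, ?_⟩
  · have hf : Z - ⌊Z⌋ ≥ 0 := by linarith [Int.floor_le Z]
    have : (B : ℝ) * η < (k : ℝ) * η := by linarith
    have : (B : ℝ) < (k : ℝ) := lt_of_mul_lt_mul_right this hη.le
    exact_mod_cast this.le
  · have heq : (k : ℝ) * η - ((T - ⌊Z⌋ : ℤ) : ℝ) - Z = (k : ℝ) * η - ((Z - ⌊Z⌋) + (T : ℝ)) := by
      push_cast; ring
    rw [heq, abs_lt]
    constructor <;> [linarith; linarith]

lemma approx_step {η ε : ℝ} (hη : η ≠ 0) (hηε : |η| < ε) (Z : ℝ) (B : ℕ) :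
    ∃ k : ℕ, B ≤ k ∧ ∃ i : ℤ, |(k : ℝ) * η - i - Z| < ε := by
  rcases lt_or_gt_of_ne hη with hneg | hpos
  · have h0 : (0:ℝ) < -η := by linarith
    have h1 : -η < ε := by rw [abs_of_neg hneg] at hηε; linarith
    obtain ⟨k, hkB, i, hki⟩ := approx_step_pos h0 h1 (-Z) B
    refine ⟨k, hkB, -i, ?_⟩
    have h : (k : ℝ) * η - ((-i : ℤ) : ℝ) - Z = -((k : ℝ) * (-η) - i - (-Z)) := by push_cast; ring
    rw [h, abs_neg]; exact hki
  · exact approx_step_pos hpos (by rwa [abs_of_pos hpos] at hηε) Z B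

/-- Density of the irrational rotation orbit over naturals, with index ≥ B. -/
lemma rot_ge {ξ : ℝ} (hξ : Irrational ξ) (Z : ℝ) (B : ℕ) {ε : ℝ} (hε : 0 < ε) :
    ∃ k : ℕ, B ≤ k ∧ 1 ≤ k ∧ close ε ((k : ℝ) * ξ - Z) := by
  obtain ⟨p, P, hp1, hne, hlt⟩ := dirichlet hξ hε
  obtain ⟨k', hk'B, i, hki⟩ := approx_step (abs_pos.1 hne) hlt Z (max B 1)
  refine ⟨k' * p, ?_, ?_, ⟨k' * P + i, ?_⟩⟩
  · calc B ≤ max B 1 := le_max_left _ _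
      _ ≤ k' := hk'B
      _ ≤ k' * p := Nat.le_mul_of_pos_right _ hp1
  · have : 1 ≤ k' := le_trans (le_max_right B 1) hk'B
    exact Nat.one_le_iff_ne_zero.2 (by positivity)
  · have h : ((k' * p : ℕ) : ℝ) * ξ - Z - ((k' * P + i : ℤ) : ℝ)
        = (k' : ℝ) * ((p : ℝ) * ξ - P) - i - Z := by push_cast; ring
    rw [h]; exact hki

/-- The set of vertical limit values: `s` such that arbitrarily close to `s` (mod 1) there are
values `n²l/2` with `n·l` arbitrarily close to `0` (mod 1). -/
def Vset (l : ℝ) : Set ℝ :=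
  {s | ∀ δ > (0:ℝ), ∀ ε > (0:ℝ), ∃ n : ℕ,
    1 ≤ n ∧ close δ ((n : ℝ) * l) ∧ close ε ((n : ℝ) ^ 2 * l / 2 - s)}

lemma Vset_sub_int {l s : ℝ} (hs : s ∈ Vset l) (j : ℤ) : s - (j : ℝ) ∈ Vset l := by
  intro δ hδ ε hε
  obtain ⟨n, hn1, hna, hnb⟩ := hs δ hδ ε hε
  refine ⟨n, hn1, hna, ?_⟩
  obtain ⟨k, hk⟩ := hnb
  refine ⟨k + j, ?_⟩
  have h : (n : ℝ) ^ 2 * l / 2 - (s - j) - ((k + j : ℤ) : ℝ)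
      = (n : ℝ) ^ 2 * l / 2 - s - k := by push_cast; ring
  rw [h]; exact hk

lemma Vset_add {l s t : ℝ} (hs : s ∈ Vset l) (ht : t ∈ Vset l) : s + t ∈ Vset l := by
  intro δ hδ ε hε
  obtain ⟨n₁, hn₁1, hn₁a, hn₁b⟩ := hs (δ/2) (by linarith) (ε/3) (by linarith)
  have hδ₂ : 0 < min (δ/2) (ε/(3*((n₁ : ℝ)+1))) := by
    apply lt_min (by linarith); positivity
  obtain ⟨n₂, hn₂1, hn₂a, hn₂b⟩ := ht _ hδ₂ (ε/3) (by linarith)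
  refine ⟨n₁ + n₂, by omega, ?_, ?_⟩
  · have := close_add hn₁a (close_mono (min_le_left _ _) hn₂a)
    have h2 : ((n₁ + n₂ : ℕ) : ℝ) * l = (n₁ : ℝ) * l + (n₂ : ℝ) * l := by push_cast; ring
    rw [h2]
    simpa using this
  · -- (n₁+n₂)² l/2 - (s+t) = (n₁² l/2 - s) + (n₂² l/2 - t) + n₁·(n₂ l)
    have hcross : close (ε/3) ((n₁ : ℝ) * ((n₂ : ℝ) * l)) := by
      have h := close_natmul hn₁1 (close_mono (min_le_right _ _) hn₂a)
      refine close_mono ?_ h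
      have hn1R : (1:ℝ) ≤ (n₁:ℝ) := by exact_mod_cast hn₁1
      rw [mul_div_assoc']
      rw [div_le_div_iff₀ (by positivity) (by norm_num)]
      nlinarith
    have hsum := close_add (close_add hn₁b hn₂b) hcross
    have h2 : ((n₁ + n₂ : ℕ) : ℝ) ^ 2 * l / 2 - (s + t)
        = ((n₁ : ℝ) ^ 2 * l / 2 - s) + ((n₂ : ℝ) ^ 2 * l / 2 - t) + (n₁ : ℝ) * ((n₂ : ℝ) * l) := by
      push_cast; ring
    rw [h2]
    refine close_mono (by linarith) hsum

lemma Vset_nsmul {l s : ℝ} (hs : s ∈ Vset l) : ∀ k : ℕ, 1 ≤ k → (k : ℝ) * s ∈ Vset l := by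
  intro k hk
  induction k with
  | zero => omega
  | succ m ih =>
    rcases Nat.eq_zero_or_pos m with h | h
    · subst h; simpa using hs
    · have := Vset_add (ih h) hs
      have h2 : ((m + 1 : ℕ) : ℝ) * s = (m : ℝ) * s + s := by push_cast; ring
      rw [h2]; exact this

lemma finite_torsion {l : ℝ} (hfin : (Vset l ∩ Ico (0:ℝ) 1).Finite) :
    ∃ N : ℕ, 1 ≤ N ∧ ∀ s ∈ Vset l, ∃ j : ℤ, (N : ℝ) * s = (j : ℝ) := by
  classical
  set K₀ := hfin.toFinset.card with hK₀
  refine ⟨Nat.factorial K₀, Nat.one_le_iff_ne_zero.2 (Nat.factorial_ne_zero _), ?_⟩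
  intro s hs
  have hfr : ∀ x : ℝ, Int.fract x = x - (⌊x⌋ : ℝ) := fun x => rfl
  have hmap : ∀ k ∈ Finset.Icc 1 (K₀ + 1), Int.fract ((k : ℝ) * s) ∈ hfin.toFinset := by
    intro k hk
    rw [Set.Finite.mem_toFinset]
    have hk1 : 1 ≤ k := (Finset.mem_Icc.1 hk).1
    constructor
    · have h1 : ((k : ℝ) * s) ∈ Vset l := Vset_nsmul hs k hk1
      have h2 := Vset_sub_int h1 ⌊(k : ℝ) * s⌋
      rw [hfr]
      exact h2
    · exact ⟨Int.fract_nonneg _, Int.fract_lt_one _⟩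
  have hcard : hfin.toFinset.card < (Finset.Icc 1 (K₀ + 1)).card := by
    rw [Nat.card_Icc]; omega
  obtain ⟨k₁, hk₁, k₂, hk₂, hne, heq⟩ :=
    Finset.exists_ne_map_eq_of_card_lt_of_maps_to hcard hmap
  have main : ∀ a b : ℕ, a ∈ Finset.Icc 1 (K₀+1) → b ∈ Finset.Icc 1 (K₀+1) → b < a →
      Int.fract ((a : ℝ) * s) = Int.fract ((b : ℝ) * s) → ∃ j : ℤ, (K₀.factorial : ℝ) * s = j := by
    intro a b ha hb hba hfeq
    have ha' := Finset.mem_Icc.1 ha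
    have hb' := Finset.mem_Icc.1 hb
    set d := a - b with hdd
    have hd1 : 1 ≤ d := by omega
    have hdK : d ≤ K₀ := by omega
    have hcast : (d : ℝ) = (a : ℝ) - (b : ℝ) := by
      rw [hdd, Nat.cast_sub hba.le]
    rw [hfr, hfr] at hfeq
    have hds : (d : ℝ) * s = ((⌊(a : ℝ) * s⌋ - ⌊(b : ℝ) * s⌋ : ℤ) : ℝ) := by
      rw [hcast]; push_cast; linarith
    obtain ⟨mq, hmq⟩ := Nat.dvd_factorial hd1 hdK
    refine ⟨(⌊(a : ℝ) * s⌋ - ⌊(b : ℝ) * s⌋) * mq, ?_⟩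
    have hKd : ((K₀.factorial : ℕ) : ℝ) = (d : ℝ) * (mq : ℝ) := by
      rw [hmq]; push_cast; ring
    rw [hKd]
    push_cast
    rw [mul_assoc, mul_comm, mul_assoc, mul_comm s, hds]
    push_cast; ring
  rcases hne.lt_or_gt with hlt | hlt
  · exact main k₂ k₁ hk₂ hk₁ hlt heq.symm
  · exact main k₁ k₂ hk₁ hk₂ hlt heq

lemma finite_dagger {l : ℝ} {N : ℕ}
    (htor : ∀ s ∈ Vset l, ∃ j : ℤ, (N : ℝ) * s = (j : ℝ)) :
    ∀ ε > (0:ℝ), ∃ δ > (0:ℝ), ∀ n : ℕ, 1 ≤ n → close δ ((n : ℝ) * l) →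
      close ε ((N : ℝ) * ((n : ℝ) ^ 2 * l / 2)) := by
  by_contra hcon
  push_neg at hcon
  obtain ⟨ε, hε, hbad⟩ := hcon
  have hchoice : ∀ j : ℕ, ∃ n : ℕ, 1 ≤ n ∧ close (1/(j+1)) ((n : ℝ) * l) ∧
      ¬ close ε ((N : ℝ) * ((n : ℝ) ^ 2 * l / 2)) := by
    intro j
    obtain ⟨n, hn⟩ := hbad (1/(j+1)) (by positivity)
    exact ⟨n, hn.1, hn.2.1, hn.2.2⟩
  choose n hn1 hn2 hn3 using hchoice
  set w : ℕ → ℝ := fun j => Int.fract ((n j : ℝ) ^ 2 * l / 2) with hw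
  have hwmem : ∀ j, w j ∈ Icc (0:ℝ) 1 :=
    fun j => ⟨Int.fract_nonneg _, (Int.fract_lt_one _).le⟩
  obtain ⟨a, _, φ, hφ, hconv⟩ :=
    tendsto_subseq_of_bounded (Metric.isBounded_Icc (0:ℝ) 1) hwmem
  have haV : a ∈ Vset l := by
    intro δ hδ ε' hε'
    obtain ⟨J₁, hJ₁⟩ := Metric.tendsto_atTop.1 hconv ε' hε'
    obtain ⟨J₂, hJ₂⟩ := exists_nat_gt (1/δ)
    set j := max J₁ J₂ with hj
    refine ⟨n (φ j), hn1 _, ?_, ?_⟩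
    · refine close_mono ?_ (hn2 (φ j))
      have h1 : (J₂ : ℝ) ≤ (φ j : ℝ) := by
        exact_mod_cast le_trans (le_max_right J₁ J₂) (hφ.id_le j)
      rw [div_le_iff₀ (by positivity)]
      rw [div_lt_iff₀ hδ] at hJ₂
      nlinarith
    · refine ⟨⌊(n (φ j) : ℝ) ^ 2 * l / 2⌋, ?_⟩
      have h2 := hJ₁ j (le_max_left J₁ J₂)
      rw [Function.comp_apply, Real.dist_eq] at h2
      have h3 : (n (φ j) : ℝ) ^ 2 * l / 2 - a - (⌊(n (φ j) : ℝ) ^ 2 * l / 2⌋ : ℝ)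
          = w (φ j) - a := by
        show _ = Int.fract ((n (φ j) : ℝ) ^ 2 * l / 2) - a
        rw [fract_def]; ring
      rw [h3]; exact h2
  obtain ⟨i, hi⟩ := htor a haV
  -- N * w (φ j) → N * a = i, contradicting hn3 eventually
  have hNconv : Filter.Tendsto (fun j => (N : ℝ) * w (φ j)) Filter.atTop (nhds ((N : ℝ) * a)) :=
    hconv.const_mul _
  obtain ⟨J, hJ⟩ := Metric.tendsto_atTop.1 hNconv ε hε
  refine hn3 (φ J) ⟨(N : ℤ) * ⌊(n (φ J) : ℝ) ^ 2 * l / 2⌋ + i, ?_⟩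
  have h4 := hJ J le_rfl
  rw [Real.dist_eq] at h4
  have h5 : (N : ℝ) * ((n (φ J) : ℝ) ^ 2 * l / 2)
        - (((N : ℤ) * ⌊(n (φ J) : ℝ) ^ 2 * l / 2⌋ + i : ℤ) : ℝ)
      = (N : ℝ) * w (φ J) - ((N : ℝ) * a) := by
    show _ = (N:ℝ) * Int.fract ((n (φ J) : ℝ) ^ 2 * l / 2) - (N:ℝ) * a
    rw [fract_def]; push_cast; linarith [hi]
  rw [h5]
  exact h4

lemma finite_contra {l : ℝ} (hl : Irrational l) {N : ℕ} (hN : 1 ≤ N)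
    (hdag : ∀ ε > (0:ℝ), ∃ δ > (0:ℝ), ∀ n : ℕ, 1 ≤ n → close δ ((n : ℝ) * l) →
      close ε ((N : ℝ) * ((n : ℝ) ^ 2 * l / 2))) : False := by
  obtain ⟨δd, hδd, hD⟩ := hdag (1/16) (by norm_num)
  set δ := δd/2 with hδdef
  have hδ : 0 < δ := by positivity
  -- the cross-term rigidity
  have CL : ∀ m n : ℕ, 1 ≤ m → 1 ≤ n → close δ ((m : ℝ) * l) → close δ ((n : ℝ) * l) →
      close (3/16) ((N : ℝ) * (m : ℝ) * (n : ℝ) * l) := by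
    intro m n hm hn hcm hcn
    have c1 := hD m hm (close_mono (by linarith) hcm)
    have c2 := hD n hn (close_mono (by linarith) hcn)
    have hsum : close δd (((m + n : ℕ) : ℝ) * l) := by
      have := close_add hcm hcn
      have h2 : ((m + n : ℕ) : ℝ) * l = (m : ℝ) * l + (n : ℝ) * l := by push_cast; ring
      rw [h2]
      simpa [hδdef] using this
    have c3 := hD (m + n) (by omega) hsum
    have hcomb := close_sub_close (close_sub_close c3 c1) c2
    have heq : ((N : ℝ) * (((m + n : ℕ) : ℝ) ^ 2 * l / 2) - (N : ℝ) * ((m : ℝ) ^ 2 * l / 2))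
        - (N : ℝ) * ((n : ℝ) ^ 2 * l / 2) = (N : ℝ) * (m : ℝ) * (n : ℝ) * l := by
      push_cast; ring
    rw [heq] at hcomb
    exact close_mono (by norm_num) hcomb
  -- choose q : large with q*l near an integer
  obtain ⟨q, hqB, hq1, hqc⟩ := rot_ge hl 0 (Nat.ceil ((2:ℝ)/((N : ℝ) * δ))) hδ
  rw [sub_zero] at hqc
  have hqR : (2:ℝ)/((N : ℝ) * δ) ≤ (q : ℝ) := by
    calc (2:ℝ)/((N : ℝ) * δ) ≤ (Nat.ceil ((2:ℝ)/((N : ℝ) * δ)) : ℝ) := Nat.le_ceil _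
      _ ≤ (q : ℝ) := by exact_mod_cast hqB
  -- choose a very good denominator p'
  have hNq : (0:ℝ) < (N : ℝ) * (q : ℝ) := by
    have : (0:ℝ) < (N:ℝ) := by exact_mod_cast hN
    have : (0:ℝ) < (q:ℝ) := by exact_mod_cast hq1
    positivity
  obtain ⟨p', P', hp'1, hη0, hηlt⟩ := dirichlet hl
    (lt_min (by positivity : (0:ℝ) < δ/8) (by positivity : (0:ℝ) < 1/(8 * ((N:ℝ) * q))))
  set η := (p' : ℝ) * l - P' with hηdef
  set ψ := (N : ℝ) * (q : ℝ) * η with hψdef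
  have hψne : ψ ≠ 0 := by
    intro h
    rw [hψdef] at h
    rcases mul_eq_zero.1 h with h1 | h2
    · exact hNq.ne' h1
    · rw [h2] at hη0; simp at hη0
  have hψabs : |ψ| < 1/8 := by
    rw [hψdef, abs_mul, abs_of_pos hNq]
    have h1 : |η| < 1/(8 * ((N:ℝ) * q)) := lt_of_lt_of_le hηlt (min_le_right _ _)
    rw [lt_div_iff₀ (by positivity)] at h1
    calc (N:ℝ) * q * |η| = |η| * ((N:ℝ) * q) := by ring
      _ < 1/8 := by linarith
  -- find k with k|ψ| in (1/4, 3/8]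
  obtain ⟨k, hk1, hk2⟩ := hit (abs_pos.2 hψne) (by positivity : (0:ℝ) ≤ 1/4 + |ψ|)
  have hklb : 1/4 < (k : ℝ) * |ψ| := by linarith
  have hkub : (k : ℝ) * |ψ| ≤ 3/8 := by linarith [hψabs]
  have hkpos : 1 ≤ k := by
    by_contra h
    push_neg at h
    interval_cases k
    simp at hklb; linarith
  -- n := k * p' is close to an integer at scale δ
  have hkη : (k : ℝ) * |η| < δ := by
    have habs : |ψ| = (N:ℝ) * q * |η| := by
      rw [hψdef, abs_mul, abs_of_pos hNq]
    have h2 : (k:ℝ) * ((N:ℝ)*q*|η|) ≤ 3/8 := by rw [← habs]; exact hkub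
    -- k|η| = (k * Nq|η|)/(Nq) ≤ (3/8)/(Nq) ≤ (3/8)*(Nδ/2)/N = 3δ/16 < δ
    have h3 : (k:ℝ) * |η| ≤ (3/8) / ((N:ℝ)*q) := by
      rw [le_div_iff₀ hNq]; nlinarith
    have h4 : (1:ℝ)/((N:ℝ)*q) ≤ δ/2 := by
      rw [div_le_iff₀ hNq]
      rw [div_le_iff₀ (by positivity : (0:ℝ) < (N:ℝ)*δ)] at hqR
      nlinarith
    calc (k:ℝ) * |η| ≤ (3/8) / ((N:ℝ)*q) := h3
      _ = (3/8) * (1/((N:ℝ)*q)) := by ring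
      _ ≤ (3/8) * (δ/2) := by nlinarith
      _ < δ := by linarith
  have hnc : close δ (((k * p' : ℕ) : ℝ) * l) := by
    refine ⟨(k : ℤ) * P', ?_⟩
    have h : ((k * p' : ℕ) : ℝ) * l - (((k:ℤ) * P' : ℤ) : ℝ) = (k : ℝ) * η := by
      rw [hηdef]; push_cast; ring
    rw [h, abs_mul, abs_of_nonneg (by positivity : (0:ℝ) ≤ (k:ℝ))]
    exact hkη
  -- apply CL with m = q, n = k p'
  have hCL := CL q (k * p') hq1 (Nat.one_le_iff_ne_zero.2 (Nat.mul_ne_zero (by omega) (by omega))) hqc hnc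
  obtain ⟨j, hj⟩ := hCL
  -- but N q (k p') l = integer + k ψ where 1/4 < |kψ| ≤ 3/8
  have hval : (N : ℝ) * (q : ℝ) * ((k * p' : ℕ) : ℝ) * l
      = ((N * q * k : ℕ) : ℝ) * (P' : ℝ) + (k : ℝ) * ψ := by
    rw [hψdef, hηdef]; push_cast; ring
  rw [hval] at hj
  set i : ℤ := j - (N * q * k : ℕ) * P' with hidef
  have hj2 : |(k : ℝ) * ψ - (i : ℝ)| < 3/16 := by
    have h : ((N * q * k : ℕ) : ℝ) * (P' : ℝ) + (k : ℝ) * ψ - (j : ℝ)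
        = (k : ℝ) * ψ - (i : ℝ) := by
      rw [hidef]; push_cast; ring
    rw [← h]; exact hj
  have hkψabs : |(k:ℝ) * ψ| = (k:ℝ) * |ψ| := by
    rw [abs_mul, abs_of_nonneg (by positivity : (0:ℝ) ≤ (k:ℝ))]
  rcases eq_or_ne i 0 with h0 | h0
  · rw [h0] at hj2
    simp at hj2
    linarith
  · have hi1 : (1:ℝ) ≤ |(i:ℝ)| := by
      have : (1:ℤ) ≤ |i| := by have := abs_pos.2 h0; omega
      calc (1:ℝ) ≤ ((|i| : ℤ) : ℝ) := by exact_mod_cast this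
        _ = |(i:ℝ)| := by push_cast; simp
    have := abs_sub_abs_le_abs_sub ((i:ℝ)) ((k:ℝ) * ψ)
    rw [abs_sub_comm] at hj2
    have hub : |(k:ℝ) * ψ| ≤ 3/8 := by rw [hkψabs]; exact hkub
    linarith

lemma infinite_case {l : ℝ} (hinf : (Vset l ∩ Ico (0:ℝ) 1).Infinite) (Z : ℝ) {ε : ℝ}
    (hε : 0 < ε) : ∃ s ∈ Vset l, close ε (s - Z) := by
  classical
  set M := Nat.ceil (1/ε) + 1 with hM
  have hM1 : 1 ≤ M := by omega
  have hMR : 1/ε < (M : ℝ) := by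
    calc 1/ε ≤ (Nat.ceil (1/ε) : ℝ) := Nat.le_ceil _
      _ < (M : ℝ) := by rw [hM]; push_cast; linarith
  have hMpos : (0:ℝ) < (M:ℝ) := by positivity
  have hinvM : 1/(M:ℝ) < ε := by
    rw [div_lt_iff₀ hMpos]
    rw [div_lt_iff₀ hε] at hMR
    nlinarith
  -- the finite set of rationals with denominator ≤ M in [0,1)
  set QM : Set ℝ := {r | ∃ (d : ℕ) (j : ℤ), 1 ≤ d ∧ d ≤ M ∧ (d:ℝ) * r = (j:ℝ)} with hQM
  have hQMfin : (QM ∩ Ico (0:ℝ) 1).Finite := by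
    have himg : (QM ∩ Ico (0:ℝ) 1) ⊆
        (fun p : ℕ × ℤ => ((p.2 : ℝ) / (p.1 : ℝ))) ''
          ((Finset.Icc 1 M : Finset ℕ) ×ˢ (Finset.Icc (0:ℤ) M) : Finset (ℕ × ℤ)) := by
      rintro r ⟨⟨d, j, hd1, hdM, hdr⟩, hr0, hr1⟩
      have hdpos : (0:ℝ) < (d:ℝ) := by exact_mod_cast hd1
      refine ⟨(d, j), ?_, ?_⟩
      · simp only [Finset.coe_product, Set.mem_prod, Finset.mem_coe, Finset.mem_Icc]
        refine ⟨⟨hd1, hdM⟩, ?_, ?_⟩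
        · have : (0:ℝ) ≤ (j:ℝ) := by rw [← hdr]; positivity
          exact_mod_cast this
        · have h1 : (j:ℝ) < (d:ℝ) := by rw [← hdr]; nlinarith
          have h2 : (j:ℝ) < (M:ℝ) + 1 := by
            have : (d:ℝ) ≤ (M:ℝ) := by exact_mod_cast hdM
            linarith
          have : (j:ℤ) < (M:ℤ) + 1 := by exact_mod_cast h2
          omega
      · show (j:ℝ)/(d:ℝ) = r
        rw [← hdr]; field_simp
    exact Set.Finite.subset (Set.Finite.image _ (Finset.finite_toSet _)) himg
  obtain ⟨s, hsmem⟩ := (hinf.diff hQMfin).nonempty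
  obtain ⟨⟨hsV, hs0, hs1⟩, hsQM⟩ := hsmem
  -- pigeonhole: two multiples of s with fractional parts within 1/M
  have hmap : ∀ k ∈ Finset.Icc 1 (M + 1),
      ⌊Int.fract ((k:ℝ) * s) * M⌋.toNat ∈ Finset.range M := by
    intro k _
    rw [Finset.mem_range]
    have h1 : Int.fract ((k:ℝ) * s) * M < M := by
      nlinarith [Int.fract_lt_one ((k:ℝ) * s), Int.fract_nonneg ((k:ℝ) * s)]
    have h2 : (0:ℝ) ≤ Int.fract ((k:ℝ) * s) * M := by
      exact mul_nonneg (Int.fract_nonneg _) hMpos.le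
    have h3 : (⌊Int.fract ((k:ℝ) * s) * M⌋ : ℝ) < (M:ℝ) := lt_of_le_of_lt (Int.floor_le _) h1
    have h4 : (0:ℤ) ≤ ⌊Int.fract ((k:ℝ) * s) * M⌋ := Int.floor_nonneg.2 h2
    have h5 : ⌊Int.fract ((k:ℝ) * s) * M⌋ < (M:ℤ) := by exact_mod_cast h3
    omega
  have hcard : (Finset.range M).card < (Finset.Icc 1 (M + 1)).card := by
    rw [Finset.card_range, Nat.card_Icc]; omega
  obtain ⟨k₁, hk₁, k₂, hk₂, hne, heq⟩ :=
    Finset.exists_ne_map_eq_of_card_lt_of_maps_to hcard hmap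
  -- produce ordered pair
  have main : ∀ a b : ℕ, a ∈ Finset.Icc 1 (M+1) → b ∈ Finset.Icc 1 (M+1) → b < a →
      ⌊Int.fract ((a:ℝ) * s) * M⌋.toNat = ⌊Int.fract ((b:ℝ) * s) * M⌋.toNat →
      ∃ s' ∈ Vset l, close ε (s' - Z) := by
    intro a b ha hb hba hfeq
    have ha' := Finset.mem_Icc.1 ha
    have hb' := Finset.mem_Icc.1 hb
    set e := Int.fract ((a:ℝ) * s) - Int.fract ((b:ℝ) * s) with hedef
    have heabs : |e| < 1/(M:ℝ) := by
      have hfa0 : (0:ℝ) ≤ Int.fract ((a:ℝ) * s) * M :=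
        mul_nonneg (Int.fract_nonneg _) hMpos.le
      have hfb0 : (0:ℝ) ≤ Int.fract ((b:ℝ) * s) * M :=
        mul_nonneg (Int.fract_nonneg _) hMpos.le
      have h6 : ⌊Int.fract ((a:ℝ) * s) * M⌋ = ⌊Int.fract ((b:ℝ) * s) * M⌋ := by
        have h7 := Int.floor_nonneg.2 hfa0
        have h8 := Int.floor_nonneg.2 hfb0
        omega
      have h9 : |Int.fract ((a:ℝ) * s) * M - Int.fract ((b:ℝ) * s) * M| < 1 :=
        Int.abs_sub_lt_one_of_floor_eq_floor h6
      have h10 : |e| * (M:ℝ) < 1 := by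
        have h11 : e * (M:ℝ) = Int.fract ((a:ℝ) * s) * M - Int.fract ((b:ℝ) * s) * M := by
          rw [hedef]; ring
        calc |e| * (M:ℝ) = |e * (M:ℝ)| := by rw [abs_mul, abs_of_pos hMpos]
          _ < 1 := by rw [h11]; exact h9
      rw [lt_div_iff₀ hMpos]
      exact h10
    set d := a - b with hdd
    have hd1 : 1 ≤ d := by omega
    have hdM : d ≤ M := by omega
    have hde : (d:ℝ) * s = ((⌊(a:ℝ) * s⌋ - ⌊(b:ℝ) * s⌋ : ℤ) : ℝ) + e := by
      have hcast : (d : ℝ) = (a : ℝ) - (b : ℝ) := by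
        rw [hdd, Nat.cast_sub hba.le]
      rw [hedef, fract_def, fract_def, hcast]
      push_cast; ring
    have hene : e ≠ 0 := by
      intro h0
      refine hsQM ⟨⟨d, ⌊(a:ℝ) * s⌋ - ⌊(b:ℝ) * s⌋, hd1, hdM, ?_⟩, hs0, hs1⟩
      rw [hde, h0, add_zero]
    obtain ⟨m, hm1, i, hmi⟩ := approx_step hene (lt_trans heabs hinvM) Z 1
    refine ⟨((m * d : ℕ) : ℝ) * s, Vset_nsmul hsV (m * d)
      (Nat.one_le_iff_ne_zero.2 (Nat.mul_ne_zero (by omega) (by omega))), ?_⟩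
    refine ⟨(m : ℤ) * (⌊(a:ℝ) * s⌋ - ⌊(b:ℝ) * s⌋) + i, ?_⟩
    have h : ((m * d : ℕ) : ℝ) * s - Z - (((m : ℤ) * (⌊(a:ℝ) * s⌋ - ⌊(b:ℝ) * s⌋) + i : ℤ) : ℝ)
        = (m : ℝ) * e - i - Z := by
      have hmd : ((m * d : ℕ) : ℝ) * s = (m:ℝ) * ((d:ℝ) * s) := by push_cast; ring
      rw [hmd, hde]; push_cast; ring
    rw [h]; exact hmi
  rcases hne.lt_or_gt with hlt | hlt
  · exact main k₂ k₁ hk₂ hk₁ hlt heq.symm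
  · exact main k₁ k₂ hk₁ hk₂ hlt heq

/-- Main density result along near-return times: for irrational `l`, the values `n²l/2`
with `n·l` close to an integer are dense mod 1. -/
lemma spade {l : ℝ} (hl : Irrational l) {δ : ℝ} (hδ : 0 < δ) (Z : ℝ) {ε : ℝ} (hε : 0 < ε) :
    ∃ n : ℕ, 1 ≤ n ∧ close δ ((n : ℝ) * l) ∧ close ε ((n : ℝ) ^ 2 * l / 2 - Z) := by
  have hinf : (Vset l ∩ Ico (0:ℝ) 1).Infinite := by
    rcases (Vset l ∩ Ico (0:ℝ) 1).finite_or_infinite with hfin | hinf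
    · exfalso
      obtain ⟨N, hN1, htor⟩ := finite_torsion hfin
      exact finite_contra hl hN1 (finite_dagger htor)
    · exact hinf
  obtain ⟨s, hsV, hscl⟩ := infinite_case hinf Z (by linarith : (0:ℝ) < ε/2)
  obtain ⟨n, hn1, hna, hnb⟩ := hsV δ hδ (ε/2) (by linarith)
  refine ⟨n, hn1, hna, ?_⟩
  have := close_add hnb hscl
  rw [sub_add_sub_cancel] at this
  simpa using this

/-- Joint density: for irrational `l`, `(m·l + d₁, m²l/2 + d₂)` comes close to ℤ² -/
lemma key {l : ℝ} (hl : Irrational l) (d₁ d₂ : ℝ) {ε : ℝ} (hε : 0 < ε) :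
    ∃ m : ℕ, 1 ≤ m ∧ close ε ((m : ℝ) * l + d₁) ∧ close ε ((m : ℝ) ^ 2 * l / 2 + d₂) := by
  obtain ⟨r, _, hr1, hrc⟩ := rot_ge hl (-d₁) 0 (by linarith : (0:ℝ) < ε/4)
  rw [sub_neg_eq_add] at hrc
  set δ₁ := min (ε/2) (ε/(4*((r:ℝ)+1))) with hδ₁
  have hδ₁pos : 0 < δ₁ := lt_min (by linarith) (by positivity)
  obtain ⟨n, hn1, hna, hnb⟩ := spade hl hδ₁pos (-d₂ - (r:ℝ)^2 * l / 2)
    (by linarith : (0:ℝ) < ε/4)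
  refine ⟨r + n, by omega, ?_, ?_⟩
  · have := close_add hrc hna
    have h2 : ((r + n : ℕ) : ℝ) * l + d₁ = ((r:ℝ) * l + d₁) + (n:ℝ) * l := by push_cast; ring
    rw [h2]
    exact close_mono (by linarith [min_le_left (ε/2) (ε/(4*((r:ℝ)+1)))]) this
  · have hcross : close (ε/4) ((r : ℝ) * ((n : ℝ) * l)) := by
      have h := close_natmul hr1 hna
      refine close_mono ?_ h
      have h3 : (r:ℝ) * δ₁ ≤ (r:ℝ) * (ε/(4*((r:ℝ)+1))) := by
        have : (0:ℝ) ≤ (r:ℝ) := by positivity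
        nlinarith [min_le_right (ε/2) (ε/(4*((r:ℝ)+1)))]
      refine le_trans h3 ?_
      rw [mul_div_assoc']
      rw [div_le_div_iff₀ (by positivity) (by norm_num)]
      nlinarith [(by exact_mod_cast hr1 : (1:ℝ) ≤ (r:ℝ))]
    have hsum := close_add hnb hcross
    have h4 : ((r + n : ℕ) : ℝ) ^ 2 * l / 2 + d₂
        = ((n:ℝ) ^ 2 * l / 2 - (-d₂ - (r:ℝ)^2 * l / 2)) + (r : ℝ) * ((n : ℝ) * l) := by
      push_cast; ring
    rw [h4]
    exact close_mono (by linarith) hsum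

lemma fract_close {w y ε : ℝ} (h1 : ε ≤ y) (h2 : y ≤ 1 - ε) (h : close ε (w - y)) :
    |Int.fract w - y| < ε := by
  obtain ⟨j, hj⟩ := h
  rw [abs_lt] at hj
  have hfl : ⌊w⌋ = j := by
    rw [Int.floor_eq_iff]
    constructor <;> [linarith; linarith]
  rw [fract_def, hfl, abs_lt]
  constructor <;> [linarith; linarith]

lemma clamp_spec {x ε : ℝ} (hx0 : 0 ≤ x) (hx1 : x ≤ 1) (hε : 0 < ε) (hε2 : ε ≤ 1/2) :
    ε ≤ min (max x ε) (1-ε) ∧ min (max x ε) (1-ε) ≤ 1-ε ∧ |min (max x ε) (1-ε) - x| ≤ ε := by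
  refine ⟨le_min (le_max_right _ _) (by linarith), min_le_right _ _, ?_⟩
  rw [abs_le]
  constructor
  · have h1 : x - ε ≤ max x ε := le_trans (by linarith) (le_max_left x ε)
    have h2 : x - ε ≤ 1 - ε := by linarith
    have := le_min h1 h2
    linarith
  · have h3 : max x ε ≤ x + ε := max_le (by linarith) (by linarith)
    have := min_le_left (max x ε) (1-ε)
    linarith

lemma point_spec (θ : ℝ) (hcos : Real.cos θ ≠ 0) (M : ℤ) {a : ℝ} (ha0 : 0 ≤ a) (ha1 : a < 1) :
    aLine θ (((M:ℝ) + a)/Real.cos θ) = a ∧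
    bLine θ (((M:ℝ) + a)/Real.cos θ) = Int.fract (((M:ℝ) + a) * Real.tan θ) ∧
    cLine θ (((M:ℝ) + a)/Real.cos θ) = Int.fract ((a^2 - (M:ℝ)^2) * Real.tan θ / 2) := by
  set t := ((M:ℝ) + a)/Real.cos θ with htdef
  have htc : t * Real.cos θ = (M:ℝ) + a := by
    rw [htdef]; field_simp
  have hts : t * Real.sin θ = ((M:ℝ) + a) * Real.tan θ := by
    rw [htdef, Real.tan_eq_sin_div_cos]; field_simp
  have hfl : ⌊t * Real.cos θ⌋ = M := by
    rw [htc, Int.floor_intCast_add]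
    have : ⌊a⌋ = 0 := Int.floor_eq_zero_iff.2 ⟨ha0, ha1⟩
    omega
  refine ⟨?_, ?_, ?_⟩
  · rw [aLine, htc, Int.fract_intCast_add, Int.fract_eq_self.2 ⟨ha0, ha1⟩]
  · rw [bLine, hts]
  · rw [cLine]
    congr 1
    rw [hfl]
    have e1 : t^2/2 * Real.sin θ * Real.cos θ = (t * Real.cos θ) * (t * Real.sin θ)/2 := by
      ring
    rw [e1, htc, hts]
    ring

lemma half (θ : ℝ) (hcos : Real.cos θ ≠ 0) (hirr : Irrational (Real.tan θ)) :
    Set.Icc (0:ℝ) 1 ×ˢ Set.Icc (0:ℝ) 1 ×ˢ Set.Icc (0:ℝ) 1 ⊆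
      closure {x : ℝ × ℝ × ℝ | ∃ t : ℝ, 0 ≤ t ∧ x = (aLine θ t, bLine θ t, cLine θ t)} := by
  rintro ⟨x, y, z⟩ hmem
  simp only [Set.mem_prod, Set.mem_Icc] at hmem
  obtain ⟨⟨hx0, hx1⟩, ⟨hy0, hy1⟩, ⟨hz0, hz1⟩⟩ := hmem
  rw [Metric.mem_closure_iff]
  intro ρ hρ
  set ε := min (ρ/4) (1/4) with hεdef
  have hεpos : 0 < ε := lt_min (by linarith) (by norm_num)
  have hε14 : ε ≤ 1/4 := min_le_right _ _
  have hερ : ε ≤ ρ/4 := min_le_left _ _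
  have hε12 : ε ≤ 1/2 := by linarith
  obtain ⟨haε, ha1ε, hax⟩ := clamp_spec hx0 hx1 hεpos hε12
  obtain ⟨hbε, hb1ε, hby⟩ := clamp_spec hy0 hy1 hεpos hε12
  obtain ⟨hcε, hc1ε, hcz⟩ := clamp_spec hz0 hz1 hεpos hε12
  set a := min (max x ε) (1-ε) with hadef
  set y' := min (max y ε) (1-ε) with hy'def
  set z' := min (max z ε) (1-ε) with hz'def
  have ha0 : 0 ≤ a := by linarith
  have ha1 : a < 1 := by linarith
  set τ := Real.tan θ with hτdef
  -- find an integer M of the appropriate sign with both closeness conditions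
  have hMex : ∃ M : ℤ, 0 ≤ ((M:ℝ) + a) / Real.cos θ ∧
      close ε (((M:ℝ) + a) * τ - y') ∧ close ε ((a^2 - (M:ℝ)^2) * τ / 2 - z') := by
    rcases hcos.lt_or_gt with hneg | hpos
    · -- cos θ < 0 : take M = -m
      obtain ⟨m, hm1, hk1, hk2⟩ := key (Irrational.neg hirr) (a*τ - y') (a^2*τ/2 - z') hεpos
      refine ⟨-(m:ℤ), ?_, ?_, ?_⟩
      · apply div_nonneg_of_nonpos _ hneg.le
        have : (1:ℝ) ≤ (m:ℝ) := by exact_mod_cast hm1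
        push_cast
        linarith
      · obtain ⟨j, hj⟩ := hk1
        refine ⟨j, ?_⟩
        convert hj using 2
        push_cast; ring
      · obtain ⟨j, hj⟩ := hk2
        refine ⟨j, ?_⟩
        convert hj using 2
        push_cast; ring
    · -- cos θ > 0 : take M = m
      obtain ⟨m, hm1, hk1, hk2⟩ := key hirr (a*τ - y') (z' - a^2*τ/2) hεpos
      refine ⟨(m:ℤ), ?_, ?_, ?_⟩
      · apply div_nonneg _ hpos.le
        push_cast
        positivity
      · obtain ⟨j, hj⟩ := hk1
        refine ⟨j, ?_⟩
        convert hj using 2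
        push_cast; ring
      · obtain ⟨j, hj⟩ := close_neg hk2
        refine ⟨j, ?_⟩
        convert hj using 2
        push_cast; ring
  obtain ⟨M, ht0, hby', hcz'⟩ := hMex
  obtain ⟨hA, hB, hC⟩ := point_spec θ hcos M ha0 ha1
  set t := ((M:ℝ) + a)/Real.cos θ with htdef
  refine ⟨(aLine θ t, bLine θ t, cLine θ t), ⟨t, ht0, rfl⟩, ?_⟩
  have hbb : |bLine θ t - y'| < ε := by
    rw [hB]
    exact fract_close hbε hb1ε hby'
  have hcc : |cLine θ t - z'| < ε := by
    rw [hC]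
    exact fract_close hcε hc1ε hcz'
  rw [Prod.dist_eq, Prod.dist_eq]
  have hd1 : dist x (aLine θ t) < ρ := by
    rw [hA, Real.dist_eq]
    rw [abs_sub_comm] at hax
    calc |x - a| ≤ ε := hax
      _ < ρ := by linarith
  have hd2 : dist y (bLine θ t) < ρ := by
    rw [Real.dist_eq]
    have h1 : |y - bLine θ t| ≤ |y - y'| + |bLine θ t - y'| := by
      calc |y - bLine θ t| = |(y - y') + -(bLine θ t - y')| := by congr 1; ring
        _ ≤ |y - y'| + |-(bLine θ t - y')| := abs_add_le _ _
        _ = |y - y'| + |bLine θ t - y'| := by rw [abs_neg]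
    have h2 : |y - y'| ≤ ε := by rw [abs_sub_comm]; exact hby
    linarith
  have hd3 : dist z (cLine θ t) < ρ := by
    rw [Real.dist_eq]
    have h1 : |z - cLine θ t| ≤ |z - z'| + |cLine θ t - z'| := by
      calc |z - cLine θ t| = |(z - z') + -(cLine θ t - z')| := by congr 1; ring
        _ ≤ |z - z'| + |-(cLine θ t - z')| := abs_add_le _ _
        _ = |z - z'| + |cLine θ t - z'| := by rw [abs_neg]
    have h2 : |z - z'| ≤ ε := by rw [abs_sub_comm]; exact hcz
    linarith
  exact max_lt hd1 (max_lt hd2 hd3)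

lemma lines_neg (θ t : ℝ) :
    aLine (θ + π) t = aLine θ (-t) ∧ bLine (θ + π) t = bLine θ (-t) ∧
      cLine (θ + π) t = cLine θ (-t) := by
  have hc : t * Real.cos (θ + π) = (-t) * Real.cos θ := by
    rw [Real.cos_add_pi]; ring
  have hs : t * Real.sin (θ + π) = (-t) * Real.sin θ := by
    rw [Real.sin_add_pi]; ring
  refine ⟨?_, ?_, ?_⟩
  · rw [aLine, aLine, hc]
  · rw [bLine, bLine, hs]
  · rw [cLine, cLine, hc]
    congr 1
    rw [Real.sin_add_pi, Real.cos_add_pi]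
    ring

end HeisDense

theorem stmt1 (θ : ℝ) (hcos : Real.cos θ ≠ 0) (hsin : Real.sin θ ≠ 0)
    (hirr : Irrational (Real.tan θ)) :
    (Set.Icc (0:ℝ) 1 ×ˢ Set.Icc (0:ℝ) 1 ×ˢ Set.Icc (0:ℝ) 1 ⊆
      closure {x : ℝ × ℝ × ℝ | ∃ t : ℝ, 0 ≤ t ∧ x = (aLine θ t, bLine θ t, cLine θ t)}) ∧
    (Set.Icc (0:ℝ) 1 ×ˢ Set.Icc (0:ℝ) 1 ×ˢ Set.Icc (0:ℝ) 1 ⊆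
      closure {x : ℝ × ℝ × ℝ | ∃ t : ℝ, t ≤ 0 ∧ x = (aLine θ t, bLine θ t, cLine θ t)}) := by
  constructor
  · exact HeisDense.half θ hcos hirr
  · have hcos' : Real.cos (θ + π) ≠ 0 := by
      rw [Real.cos_add_pi]; exact neg_ne_zero.2 hcos
    have hirr' : Irrational (Real.tan (θ + π)) := by
      rw [Real.tan_periodic θ]; exact hirr
    have hset : {x : ℝ × ℝ × ℝ | ∃ t : ℝ, t ≤ 0 ∧ x = (aLine θ t, bLine θ t, cLine θ t)}
        = {x : ℝ × ℝ × ℝ | ∃ t : ℝ, 0 ≤ t ∧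
            x = (aLine (θ + π) t, bLine (θ + π) t, cLine (θ + π) t)} := by
      ext p
      constructor
      · rintro ⟨t, ht, rfl⟩
        refine ⟨-t, by linarith, ?_⟩
        obtain ⟨h1, h2, h3⟩ := HeisDense.lines_neg θ (-t)
        rw [h1, h2, h3, neg_neg]
      · rintro ⟨t, ht, rfl⟩
        refine ⟨-t, by linarith, ?_⟩
        obtain ⟨h1, h2, h3⟩ := HeisDense.lines_neg θ t
        rw [h1, h2, h3]
    rw [hset]
    exact HeisDense.half (θ + π) hcos' hirr'
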